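/- Manaster–Koehler representation: fix k ≥ 0 and 0 ≤ c < 1. If c ≤ C_BS(k, √(2k)), then Y_BS(k,c) = inf over 0 < y ≤ √(2k) of [y + (c - C_BS(k,y))/φ(-k/y + y/2)]; if c ≥ C_BS(k, √(2k)), then Y_BS(k,c) = sup over y ≥ √(2k) of [y + (c - C_BS(k,y))/φ(-k/y + y/2)]. -/

import Mathlib

open MeasureTheory Real Filter Asymptotics Set Topology

/-- Standard normal density. -/
noncomputable def phi (z : ℝ) : ℝ := (Real.sqrt (2 * Real.pi))⁻¹ * Real.exp (-z ^ 2 / 2)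

/-- Standard normal CDF. -/
noncomputable def Phi (x : ℝ) : ℝ := ∫ z in Set.Iic x, phi z

/-- Black–Scholes normalized call price. -/
noncomputable def CBS (k y : ℝ) : ℝ :=
  if 0 < y then Phi (-k / y + y / 2) - Real.exp k * Phi (-k / y - y / 2)
  else max (1 - Real.exp k) 0

/-- Implied total standard deviation: inverse of `CBS k` on `[0,∞)`. -/
noncomputable def YBS (k c : ℝ) : ℝ := sInf {y : ℝ | 0 ≤ y ∧ CBS k y = c}

/-- Inverse of the standard normal CDF on (0,1). -/
noncomputable def PhiInv (u : ℝ) : ℝ := sInf {x : ℝ | u ≤ Phi x}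

/-- Extended-real quantile with the convention `Φ⁻¹(u) = +∞` for `u ≥ 1`, `-∞` for `u ≤ 0`. -/
noncomputable def PhiInvE (u : ℝ) : EReal :=
  if 1 ≤ u then ⊤ else if u ≤ 0 then ⊥ else ((PhiInv u : ℝ) : EReal)



lemma phi_pos (z : ℝ) : 0 < phi z := by
  have h : 0 < Real.sqrt (2 * Real.pi) := Real.sqrt_pos.mpr (by positivity)
  exact mul_pos (inv_pos.mpr h) (Real.exp_pos _)

lemma phi_cont : Continuous phi := by
  unfold phi; fun_prop

lemma phi_eq (z : ℝ) : phi z = (Real.sqrt (2 * Real.pi))⁻¹ * Real.exp (-(1/2 : ℝ) * z ^ 2) := by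
  unfold phi; ring_nf

lemma phi_integrable : Integrable phi := by
  have h := (integrable_exp_neg_mul_sq (show (0:ℝ) < 1/2 by norm_num)).const_mul
    (Real.sqrt (2 * Real.pi))⁻¹
  exact h.congr (Filter.Eventually.of_forall fun z => (phi_eq z).symm)

lemma integral_phi : ∫ z, phi z = 1 := by
  have : ∫ z, phi z = (Real.sqrt (2 * Real.pi))⁻¹ * ∫ z : ℝ, Real.exp (-(1/2 : ℝ) * z ^ 2) := by
    rw [← integral_const_mul]; exact integral_congr_ae (Filter.Eventually.of_forall fun z => phi_eq z)
  rw [this, integral_gaussian]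
  have h2 : Real.pi / (1/2 : ℝ) = 2 * Real.pi := by ring
  rw [h2, inv_mul_cancel₀ (Real.sqrt_ne_zero'.mpr (by positivity))]

lemma Phi_sub (a b : ℝ) : Phi b - Phi a = ∫ z in a..b, phi z :=
  intervalIntegral.integral_Iic_sub_Iic phi_integrable.integrableOn phi_integrable.integrableOn

lemma Phi_eq (x : ℝ) : Phi x = Phi 0 + ∫ z in (0:ℝ)..x, phi z := by
  have := Phi_sub 0 x; linarith

lemma hasDerivAt_Phi (x : ℝ) : HasDerivAt Phi (phi x) x := by
  have h : HasDerivAt (fun u => ∫ z in (0:ℝ)..u, phi z) (phi x) x :=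
    intervalIntegral.integral_hasDerivAt_right phi_integrable.intervalIntegrable
      (phi_cont.stronglyMeasurableAtFilter _ _) phi_cont.continuousAt
  have := h.const_add (Phi 0)
  exact this.congr_of_eventuallyEq (Filter.Eventually.of_forall fun z => Phi_eq z)

lemma Phi_cont : Continuous Phi :=
  continuous_iff_continuousAt.mpr fun x => (hasDerivAt_Phi x).continuousAt

lemma Phi_tendsto_atTop : Tendsto Phi atTop (𝓝 1) := by
  have h : Tendsto (fun x => ∫ z in (0:ℝ)..x, phi z) atTop
      (𝓝 (∫ z in Set.Ioi (0:ℝ), phi z)) :=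
    intervalIntegral_tendsto_integral_Ioi 0 phi_integrable.integrableOn tendsto_id
  have h2 := h.const_add (Phi 0)
  have h3 : Phi 0 + ∫ z in Set.Ioi (0:ℝ), phi z = 1 := by
    rw [show Phi 0 = ∫ z in Set.Iic (0:ℝ), phi z from rfl,
      intervalIntegral.integral_Iic_add_Ioi phi_integrable.integrableOn phi_integrable.integrableOn, integral_phi]
  rw [h3] at h2
  exact h2.congr fun x => (Phi_eq x).symm

lemma Phi_tendsto_atBot : Tendsto Phi atBot (𝓝 0) := by
  have h : Tendsto (fun x => ∫ z in x..(0:ℝ), phi z) atBot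
      (𝓝 (∫ z in Set.Iic (0:ℝ), phi z)) :=
    intervalIntegral_tendsto_integral_Iic 0 phi_integrable.integrableOn tendsto_id
  have h2 : Tendsto (fun x => Phi 0 - ∫ z in x..(0:ℝ), phi z) atBot (𝓝 (Phi 0 - Phi 0)) :=
    tendsto_const_nhds.sub (by simpa [Phi] using h)
  rw [sub_self] at h2
  exact h2.congr fun x => by have := Phi_sub x 0; linarith

lemma CBS_zero {k : ℝ} (hk : 0 ≤ k) : CBS k 0 = 0 := by
  unfold CBS
  rw [if_neg (lt_irrefl 0), max_eq_right]
  have := Real.one_le_exp hk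
  linarith

lemma exp_phi (k y : ℝ) (hy : y ≠ 0) :
    Real.exp k * phi (-k / y - y / 2) = phi (-k / y + y / 2) := by
  unfold phi
  rw [mul_comm (Real.exp k), mul_assoc, ← Real.exp_add]
  congr 2
  field_simp
  ring

lemma hasDerivAt_d1 (k : ℝ) {y : ℝ} (hy : 0 < y) :
    HasDerivAt (fun z : ℝ => -k / z + z / 2) (k / y ^ 2 + 1 / 2) y := by
  have h1 : HasDerivAt (fun z : ℝ => -k / z) (k / y ^ 2) y := by
    have := (hasDerivAt_inv hy.ne').const_mul (-k)
    simp only [div_eq_mul_inv]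
    convert this using 1
    exacts [rfl, rfl, by ring]
  exact h1.add ((hasDerivAt_id y).div_const 2)

lemma hasDerivAt_d2 (k : ℝ) {y : ℝ} (hy : 0 < y) :
    HasDerivAt (fun z : ℝ => -k / z - z / 2) (k / y ^ 2 - 1 / 2) y := by
  have h1 : HasDerivAt (fun z : ℝ => -k / z) (k / y ^ 2) y := by
    have := (hasDerivAt_inv hy.ne').const_mul (-k)
    simp only [div_eq_mul_inv]
    convert this using 1
    exacts [rfl, rfl, by ring]
  exact h1.sub ((hasDerivAt_id y).div_const 2)

lemma hasDerivAt_CBS (k : ℝ) {y : ℝ} (hy : 0 < y) :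
    HasDerivAt (CBS k) (phi (-k / y + y / 2)) y := by
  have H1 : HasDerivAt (fun z : ℝ => Phi (-k / z + z / 2))
      (phi (-k / y + y / 2) * (k / y ^ 2 + 1 / 2)) y :=
    (hasDerivAt_Phi _).comp y (hasDerivAt_d1 k hy)
  have H2 : HasDerivAt (fun z : ℝ => Phi (-k / z - z / 2))
      (phi (-k / y - y / 2) * (k / y ^ 2 - 1 / 2)) y :=
    (hasDerivAt_Phi _).comp y (hasDerivAt_d2 k hy)
  have H : HasDerivAt (fun z : ℝ => Phi (-k / z + z / 2) - Real.exp k * Phi (-k / z - z / 2))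
      (phi (-k / y + y / 2) * (k / y ^ 2 + 1 / 2) -
        Real.exp k * (phi (-k / y - y / 2) * (k / y ^ 2 - 1 / 2))) y :=
    H1.sub (H2.const_mul _)
  have hval : phi (-k / y + y / 2) * (k / y ^ 2 + 1 / 2) -
      Real.exp k * (phi (-k / y - y / 2) * (k / y ^ 2 - 1 / 2)) = phi (-k / y + y / 2) := by
    rw [← mul_assoc, exp_phi k y hy.ne']
    ring
  rw [hval] at H
  refine H.congr_of_eventuallyEq ?_
  filter_upwards [Ioi_mem_nhds hy] with z hz
  exact if_pos hz

lemma CBS_strictMonoOn (k : ℝ) : StrictMonoOn (CBS k) (Set.Ioi 0) := by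
  refine StrictMonoOn.mono ?_ (le_refl _)
  refine strictMonoOn_of_deriv_pos (convex_Ioi 0) ?_ ?_
  · intro x hx
    exact ((hasDerivAt_CBS k hx).continuousAt).continuousWithinAt
  · intro x hx
    rw [interior_Ioi] at hx
    rw [(hasDerivAt_CBS k hx).deriv]
    exact phi_pos _

lemma CBS_tendsto_zero {k : ℝ} (hk : 0 ≤ k) : Tendsto (CBS k) (𝓝[>] 0) (𝓝 0) := by
  rcases eq_or_lt_of_le hk with hk0 | hkpos
  · -- k = 0
    subst hk0
    have h : Tendsto (fun y : ℝ => Phi (y / 2) - Real.exp 0 * Phi (-(y / 2))) (𝓝[>] 0)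
        (𝓝 (Phi 0 - Real.exp 0 * Phi 0)) := by
      apply Tendsto.mono_left _ nhdsWithin_le_nhds
      have h1 : Tendsto (fun y : ℝ => y / 2) (𝓝 0) (𝓝 0) := by
        simpa using (tendsto_id (α := ℝ) (x := 𝓝 0)).div_const 2
      have h2 : Tendsto (fun y : ℝ => -(y / 2)) (𝓝 0) (𝓝 (-0)) := h1.neg
      rw [neg_zero] at h2
      exact ((Phi_cont.continuousAt.tendsto.comp h1).sub
        (((Phi_cont.continuousAt.tendsto.comp h2)).const_mul _))
    rw [show Phi 0 - Real.exp 0 * Phi 0 = 0 by simp] at h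
    refine h.congr' ?_
    filter_upwards [self_mem_nhdsWithin] with y (hy : 0 < y)
    unfold CBS
    rw [if_pos hy]
    norm_num
  · -- k > 0
    have hinv : Tendsto (fun y : ℝ => -k / y) (𝓝[>] 0) atBot := by
      have h1 : Tendsto (fun y : ℝ => k * y⁻¹) (𝓝[>] 0) atTop :=
        tendsto_inv_nhdsGT_zero.const_mul_atTop hkpos
      have h2 := tendsto_neg_atTop_atBot.comp h1
      refine h2.congr fun y => ?_
      simp [Function.comp, div_eq_mul_inv]
    have hhalf : Tendsto (fun y : ℝ => y / 2) (𝓝[>] 0) (𝓝 0) := by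
      have := ((tendsto_id (α := ℝ) (x := 𝓝 0)).div_const 2).mono_left
        (nhdsWithin_le_nhds : 𝓝[>] (0:ℝ) ≤ 𝓝 0)
      simpa using this
    have hd1 : Tendsto (fun y : ℝ => -k / y + y / 2) (𝓝[>] 0) atBot := hinv.atBot_add hhalf
    have hd2 : Tendsto (fun y : ℝ => -k / y - y / 2) (𝓝[>] 0) atBot := by
      have := hinv.atBot_add (hhalf.neg)
      simpa [sub_eq_add_neg] using this
    have hP1 : Tendsto (fun y : ℝ => Phi (-k / y + y / 2)) (𝓝[>] 0) (𝓝 0) :=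
      Phi_tendsto_atBot.comp hd1
    have hP2 : Tendsto (fun y : ℝ => Real.exp k * Phi (-k / y - y / 2)) (𝓝[>] 0)
        (𝓝 (Real.exp k * 0)) := (Phi_tendsto_atBot.comp hd2).const_mul _
    have h := hP1.sub hP2
    rw [mul_zero, sub_zero] at h
    refine h.congr' ?_
    filter_upwards [self_mem_nhdsWithin] with y (hy : 0 < y)
    exact (if_pos hy).symm

lemma CBS_tendsto_one (k : ℝ) : Tendsto (CBS k) atTop (𝓝 1) := by
  have hinv : Tendsto (fun y : ℝ => -k / y) atTop (𝓝 0) := by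
    have := tendsto_inv_atTop_zero (𝕜 := ℝ)
    have h2 := this.const_mul (-k)
    rw [mul_zero] at h2
    refine h2.congr fun y => ?_
    rw [div_eq_mul_inv]
  have hd1 : Tendsto (fun y : ℝ => -k / y + y / 2) atTop atTop :=
    hinv.add_atTop (tendsto_id.atTop_div_const (by norm_num))
  have hd2 : Tendsto (fun y : ℝ => -k / y - y / 2) atTop atBot := by
    have h : Tendsto (fun y : ℝ => -(y / 2)) atTop atBot :=
      tendsto_neg_atTop_atBot.comp (tendsto_id.atTop_div_const (by norm_num))
    have := hinv.add_atBot h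
    simpa [sub_eq_add_neg] using this
  have hP1 : Tendsto (fun y : ℝ => Phi (-k / y + y / 2)) atTop (𝓝 1) :=
    Phi_tendsto_atTop.comp hd1
  have hP2 : Tendsto (fun y : ℝ => Real.exp k * Phi (-k / y - y / 2)) atTop
      (𝓝 (Real.exp k * 0)) := (Phi_tendsto_atBot.comp hd2).const_mul _
  have h := hP1.sub hP2
  rw [mul_zero, sub_zero] at h
  refine h.congr' ?_
  filter_upwards [eventually_gt_atTop 0] with y hy
  exact (if_pos hy).symm

lemma CBS_nonneg {k : ℝ} (hk : 0 ≤ k) {y : ℝ} (hy : 0 ≤ y) : 0 ≤ CBS k y := by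
  rcases eq_or_lt_of_le hy with rfl | hy
  · rw [CBS_zero hk]
  · have hev : ∀ᶠ z in 𝓝[>] (0:ℝ), CBS k z ≤ CBS k y := by
      filter_upwards [Ioo_mem_nhdsGT_of_mem ⟨le_rfl, hy⟩] with z hz
      exact le_of_lt (CBS_strictMonoOn k hz.1 hy hz.2)
    exact le_of_tendsto (CBS_tendsto_zero hk) hev

lemma CBS_pos {k : ℝ} (hk : 0 ≤ k) {y : ℝ} (hy : 0 < y) : 0 < CBS k y := by
  have h := CBS_strictMonoOn k (Set.mem_Ioi.mpr (half_pos hy)) (Set.mem_Ioi.mpr hy)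
    (half_lt_self hy)
  have := CBS_nonneg hk (le_of_lt (half_pos hy))
  linarith

lemma CBS_continuousOn {k : ℝ} (hk : 0 ≤ k) {a b : ℝ} (ha : 0 ≤ a) :
    ContinuousOn (CBS k) (Set.Icc a b) := by
  intro x hx
  rcases eq_or_lt_of_le (ha.trans hx.1) with hx0 | hxpos
  · -- x = 0
    have hIci : ContinuousWithinAt (CBS k) (Set.Ici (0:ℝ)) 0 := by
      rw [← continuousWithinAt_Ioi_iff_Ici]
      unfold ContinuousWithinAt
      rw [CBS_zero hk]
      exact CBS_tendsto_zero hk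
    subst hx0
    exact hIci.mono (fun z hz => ha.trans hz.1)
  · exact ((hasDerivAt_CBS k hxpos).continuousAt).continuousWithinAt

/-- Mean value theorem for CBS. -/
lemma CBS_mvt {k : ℝ} (hk : 0 ≤ k) {a b : ℝ} (ha : 0 ≤ a) (hab : a < b) :
    ∃ ξ ∈ Set.Ioo a b, CBS k b - CBS k a = phi (-k / ξ + ξ / 2) * (b - a) := by
  obtain ⟨ξ, hξ, hslope⟩ := exists_hasDerivAt_eq_slope (CBS k)
    (fun y => phi (-k / y + y / 2)) hab (CBS_continuousOn hk ha)
    (fun x hx => hasDerivAt_CBS k (ha.trans_lt hx.1))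
  refine ⟨ξ, hξ, ?_⟩
  rw [hslope, div_mul_cancel₀]
  exact sub_ne_zero_of_ne hab.ne'

lemma phi_mono_nonpos {x y : ℝ} (hxy : x ≤ y) (hy : y ≤ 0) : phi x ≤ phi y := by
  unfold phi
  have h : -x ^ 2 / 2 ≤ -y ^ 2 / 2 := by nlinarith
  exact mul_le_mul_of_nonneg_left (Real.exp_le_exp.mpr h) (by positivity)

lemma phi_anti_nonneg {x y : ℝ} (hx : 0 ≤ x) (hxy : x ≤ y) : phi y ≤ phi x := by
  unfold phi
  have h : -y ^ 2 / 2 ≤ -x ^ 2 / 2 := by nlinarith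
  exact mul_le_mul_of_nonneg_left (Real.exp_le_exp.mpr h) (by positivity)

lemma d1_mono {k a b : ℝ} (hk : 0 ≤ k) (ha : 0 < a) (hab : a ≤ b) :
    -k / a + a / 2 ≤ -k / b + b / 2 := by
  have hb : 0 < b := ha.trans_le hab
  have h1 : k / b ≤ k / a := by gcongr
  have h2 : -k / a = -(k / a) := by ring
  have h3 : -k / b = -(k / b) := by ring
  rw [h2, h3]; linarith

lemma d1_nonpos {k y : ℝ} (hk : 0 ≤ k) (hy : 0 < y) (hs : y ≤ Real.sqrt (2 * k)) :
    -k / y + y / 2 ≤ 0 := by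
  have hsq : y ^ 2 ≤ 2 * k := by
    have h1 : Real.sqrt (2 * k) ^ 2 = 2 * k := Real.sq_sqrt (by positivity)
    nlinarith [Real.sqrt_nonneg (2 * k)]
  have h : y / 2 ≤ k / y := by rw [div_le_div_iff₀ two_pos hy]; nlinarith
  have h2 : -k / y = -(k / y) := by ring
  rw [h2]; linarith

lemma d1_nonneg {k y : ℝ} (hk : 0 ≤ k) (hy : 0 < y) (hs : Real.sqrt (2 * k) ≤ y) :
    0 ≤ -k / y + y / 2 := by
  have hsq : 2 * k ≤ y ^ 2 := by
    have h1 : Real.sqrt (2 * k) ^ 2 = 2 * k := Real.sq_sqrt (by positivity)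
    nlinarith [Real.sqrt_nonneg (2 * k)]
  have h : k / y ≤ y / 2 := by rw [div_le_div_iff₀ hy two_pos]; nlinarith
  have h2 : -k / y = -(k / y) := by ring
  rw [h2]; linarith

/-- Vega is monotone on `(0, √(2k)]`. -/
lemma D_mono_left {k a b : ℝ} (hk : 0 ≤ k) (ha : 0 < a) (hab : a ≤ b)
    (hb : b ≤ Real.sqrt (2 * k)) :
    phi (-k / a + a / 2) ≤ phi (-k / b + b / 2) :=
  phi_mono_nonpos (d1_mono hk ha hab) (d1_nonpos hk (ha.trans_le hab) hb)

/-- Vega is antitone on `[√(2k), ∞)`, including the junk value at `0` when `k = 0`. -/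
lemma D_anti_right {k a b : ℝ} (hk : 0 ≤ k) (hs : Real.sqrt (2 * k) ≤ a) (hab : a ≤ b)
    (ha0 : 0 ≤ a) :
    phi (-k / b + b / 2) ≤ phi (-k / a + a / 2) := by
  rcases eq_or_lt_of_le ha0 with rfl | hapos
  · -- a = 0, hence k = 0
    have hk0 : k = 0 := by
      have h1 : Real.sqrt (2 * k) = 0 := le_antisymm hs (Real.sqrt_nonneg _)
      have := Real.sqrt_eq_zero'.mp h1
      linarith
    subst hk0
    simp only [neg_zero, zero_div]
    rcases eq_or_lt_of_le hab with rfl | hbpos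
    · norm_num
    · norm_num
      exact phi_anti_nonneg le_rfl (by positivity)
  · exact phi_anti_nonneg (d1_nonneg hk hapos hs) (d1_mono hk hapos hab)

lemma exists_root {k c : ℝ} (hk : 0 ≤ k) (hc0 : 0 ≤ c) (hc1 : c < 1) :
    ∃ y, 0 ≤ y ∧ CBS k y = c ∧ YBS k c = y := by
  rcases eq_or_lt_of_le hc0 with rfl | hcpos
  · refine ⟨0, le_rfl, CBS_zero hk, ?_⟩
    have hmem : (0:ℝ) ∈ {y : ℝ | 0 ≤ y ∧ CBS k y = 0} := ⟨le_rfl, CBS_zero hk⟩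
    exact le_antisymm (csInf_le ⟨0, fun y hy => hy.1⟩ hmem)
      (le_csInf ⟨0, hmem⟩ fun y hy => hy.1)
  · obtain ⟨a, hac, hapos⟩ := (((CBS_tendsto_zero hk).eventually_lt_const hcpos).and
      self_mem_nhdsWithin).exists
    obtain ⟨b, hcb, hab⟩ := (((CBS_tendsto_one k).eventually_const_lt hc1).and
      (eventually_gt_atTop a)).exists
    have hy := intermediate_value_Icc hab.le (CBS_continuousOn hk (le_of_lt hapos))
      (⟨hac.le, hcb.le⟩ : c ∈ Set.Icc (CBS k a) (CBS k b))
    obtain ⟨y, hyI, hyc⟩ := hy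
    have hypos : 0 < y := lt_of_lt_of_le hapos hyI.1
    refine ⟨y, hypos.le, hyc, ?_⟩
    have hset : {z : ℝ | 0 ≤ z ∧ CBS k z = c} = {y} := by
      ext z
      simp only [Set.mem_setOf_eq, Set.mem_singleton_iff]
      constructor
      · rintro ⟨hz0, hzc⟩
        have hzpos : 0 < z := by
          rcases eq_or_lt_of_le hz0 with rfl | h
          · rw [CBS_zero hk] at hzc; linarith
          · exact h
        exact (CBS_strictMonoOn k).injOn hzpos hypos (hzc.trans hyc.symm)
      · rintro rfl; exact ⟨hypos.le, hyc⟩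
    unfold YBS
    rw [hset]
    exact csInf_singleton y

lemma key_left {k c ys y : ℝ} (hk : 0 ≤ k) (hys0 : 0 ≤ ys) (hysc : CBS k ys = c)
    (hyss : ys ≤ Real.sqrt (2 * k)) (hy : 0 < y) (hys : y ≤ Real.sqrt (2 * k)) :
    CBS k y - c ≤ phi (-k / y + y / 2) * (y - ys) := by
  rcases lt_trichotomy ys y with h | rfl | h
  · obtain ⟨ξ, hξ, heq⟩ := CBS_mvt hk hys0 h
    have hD : phi (-k / ξ + ξ / 2) ≤ phi (-k / y + y / 2) :=
      D_mono_left hk (hys0.trans_lt hξ.1) hξ.2.le hys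
    have hmul := mul_le_mul_of_nonneg_right hD (sub_nonneg.mpr h.le)
    rw [← hysc]
    linarith
  · rw [hysc, sub_self, sub_self, mul_zero]
  · obtain ⟨ξ, hξ, heq⟩ := CBS_mvt hk hy.le h
    have hD : phi (-k / y + y / 2) ≤ phi (-k / ξ + ξ / 2) :=
      D_mono_left hk hy hξ.1.le (hξ.2.le.trans hyss)
    have hmul := mul_le_mul_of_nonneg_right hD (sub_nonneg.mpr h.le : (0:ℝ) ≤ ys - y)
    rw [← hysc]
    nlinarith
  
lemma key_right {k c ys y : ℝ} (hk : 0 ≤ k) (hys : Real.sqrt (2 * k) ≤ ys)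
    (hysc : CBS k ys = c) (hy : Real.sqrt (2 * k) ≤ y) (hy0 : 0 ≤ y) :
    phi (-k / y + y / 2) * (y - ys) ≤ CBS k y - c := by
  have hys0 : 0 ≤ ys := (Real.sqrt_nonneg _).trans hys
  rcases lt_trichotomy ys y with h | rfl | h
  · obtain ⟨ξ, hξ, heq⟩ := CBS_mvt hk hys0 h
    have hD : phi (-k / y + y / 2) ≤ phi (-k / ξ + ξ / 2) :=
      D_anti_right hk (hys.trans hξ.1.le) hξ.2.le (hys0.trans hξ.1.le)
    have hmul := mul_le_mul_of_nonneg_right hD (sub_nonneg.mpr h.le)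
    rw [← hysc]
    linarith
  · rw [hysc, sub_self, sub_self, mul_zero]
  · obtain ⟨ξ, hξ, heq⟩ := CBS_mvt hk hy0 h
    have hD : phi (-k / ξ + ξ / 2) ≤ phi (-k / y + y / 2) :=
      D_anti_right hk hy hξ.1.le hy0
    have hmul := mul_le_mul_of_nonneg_right hD (sub_nonneg.mpr h.le : (0:ℝ) ≤ ys - y)
    rw [← hysc]
    nlinarith

theorem stmt_12' (k c : ℝ) (hk : 0 ≤ k) (hc0 : 0 ≤ c) (hc1 : c < 1) :
    (c ≤ CBS k (Real.sqrt (2 * k)) →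
      YBS k c = sInf ((fun y => y + (c - CBS k y) / phi (-k / y + y / 2)) ''
        {y : ℝ | 0 < y ∧ y ≤ Real.sqrt (2 * k)})) ∧
    (CBS k (Real.sqrt (2 * k)) ≤ c →
      YBS k c = sSup ((fun y => y + (c - CBS k y) / phi (-k / y + y / 2)) ''
        Set.Ici (Real.sqrt (2 * k)))) := by
  obtain ⟨ys, hys0, hysc, hYBS⟩ := exists_root hk hc0 hc1
  set s := Real.sqrt (2 * k) with hs
  set F := fun y => y + (c - CBS k y) / phi (-k / y + y / 2) with hF
  have hsnn : 0 ≤ s := Real.sqrt_nonneg _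
  have hFys : F ys = ys := by
    simp only [hF, hysc, sub_self, zero_div, add_zero]
  constructor
  · intro hcs
    have hys_le : ys ≤ s := by
      by_contra hcon
      push_neg at hcon
      have hyspos : 0 < ys := lt_of_le_of_lt hsnn hcon
      rcases eq_or_lt_of_le hsnn with hs0 | hspos
      · have := CBS_pos hk hyspos
        rw [hysc] at this
        rw [← hs0, CBS_zero hk] at hcs
        linarith
      · have := CBS_strictMonoOn k (Set.mem_Ioi.mpr hspos) (Set.mem_Ioi.mpr hyspos) hcon
        rw [hysc] at this
        linarith
    rw [hYBS]
    rcases eq_or_lt_of_le hsnn with hs0 | hspos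
    · -- s = 0 : region empty, ys = 0
      have hreg : {y : ℝ | 0 < y ∧ y ≤ s} = ∅ := by
        ext y; simp only [Set.mem_setOf_eq, Set.mem_empty_iff_false, iff_false, not_and, not_le]
        intro hy; rw [← hs0]; exact hy
      rw [hreg, Set.image_empty, Real.sInf_empty]
      linarith
    · have hlow : ∀ v ∈ F '' {y : ℝ | 0 < y ∧ y ≤ s}, ys ≤ v := by
        rintro v ⟨y, ⟨hy1, hy2⟩, rfl⟩
        have hD := phi_pos (-k / y + y / 2)
        have key := key_left hk hys0 hysc hys_le hy1 hy2
        simp only [hF]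
        rw [← sub_le_iff_le_add', le_div_iff₀ hD]
        nlinarith
      have hbdd : BddBelow (F '' {y : ℝ | 0 < y ∧ y ≤ s}) := ⟨ys, hlow⟩
      rcases eq_or_lt_of_le hys0 with hys00 | hyspos
      · -- ys = 0
        have hc : c = 0 := by rw [← hysc, ← hys00, CBS_zero hk]
        refine le_antisymm (le_csInf ⟨F s, ⟨s, ⟨hspos, le_rfl⟩, rfl⟩⟩ hlow) ?_
        rw [← hys00]
        refine le_of_forall_pos_le_add fun ε hε => ?_
        have hymem : min ε s ∈ {y : ℝ | 0 < y ∧ y ≤ s} := ⟨lt_min hε hspos, min_le_right _ _⟩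
        have hFy : F (min ε s) ≤ min ε s := by
          simp only [hF, hc, zero_sub]
          have h1 : -CBS k (min ε s) / phi (-k / min ε s + min ε s / 2) ≤ 0 :=
            div_nonpos_of_nonpos_of_nonneg (neg_nonpos.mpr (CBS_nonneg hk (lt_min hε hspos).le))
              (phi_pos _).le
          linarith
        calc sInf (F '' {y : ℝ | 0 < y ∧ y ≤ s}) ≤ F (min ε s) :=
              csInf_le hbdd ⟨min ε s, hymem, rfl⟩
          _ ≤ min ε s := hFy
          _ ≤ ε := min_le_left _ _
          _ = 0 + ε := (zero_add ε).symm
      · -- ys > 0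
        refine le_antisymm (le_csInf ⟨F ys, ⟨ys, ⟨hyspos, hys_le⟩, rfl⟩⟩ hlow) ?_
        calc sInf (F '' {y : ℝ | 0 < y ∧ y ≤ s}) ≤ F ys :=
              csInf_le hbdd ⟨ys, ⟨hyspos, hys_le⟩, rfl⟩
          _ = ys := hFys
  · intro hcs
    have hys_ge : s ≤ ys := by
      by_contra hcon
      push_neg at hcon
      have hspos : 0 < s := lt_of_le_of_lt hys0 hcon
      rcases eq_or_lt_of_le hys0 with hys00 | hyspos
      · have hc : c = 0 := by rw [← hysc, ← hys00, CBS_zero hk]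
        have := CBS_pos hk hspos
        rw [hc] at hcs
        linarith
      · have := CBS_strictMonoOn k (Set.mem_Ioi.mpr hyspos) (Set.mem_Ioi.mpr hspos) hcon
        rw [hysc] at this
        linarith
    rw [hYBS]
    have hupp : ∀ v ∈ F '' Set.Ici s, v ≤ ys := by
      rintro v ⟨y, hy, rfl⟩
      have hy0 : 0 ≤ y := hsnn.trans hy
      have hD := phi_pos (-k / y + y / 2)
      have key := key_right hk hys_ge hysc hy hy0
      simp only [hF]
      rw [← le_sub_iff_add_le', div_le_iff₀ hD]
      nlinarith
    refine le_antisymm ?_ (csSup_le ⟨F ys, ⟨ys, hys_ge, rfl⟩⟩ hupp)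
    calc ys = F ys := hFys.symm
      _ ≤ sSup (F '' Set.Ici s) := le_csSup ⟨ys, hupp⟩ ⟨ys, hys_ge, rfl⟩

theorem stmt_12 (k c : ℝ) (hk : 0 ≤ k) (hc0 : 0 ≤ c) (hc1 : c < 1) :
    (c ≤ CBS k (Real.sqrt (2 * k)) →
      YBS k c = sInf ((fun y => y + (c - CBS k y) / phi (-k / y + y / 2)) ''
        {y : ℝ | 0 < y ∧ y ≤ Real.sqrt (2 * k)})) ∧
    (CBS k (Real.sqrt (2 * k)) ≤ c →
      YBS k c = sSup ((fun y => y + (c - CBS k y) / phi (-k / y + y / 2)) ''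
        Set.Ici (Real.sqrt (2 * k)))) := stmt_12' k c hk hc0 hc1
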